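/- Let (f_n : I → ℝ) and (g_n : I → ℝ) be two sequences of continuous functions on a nondegenerate interval I ⊆ ℝ with f₁ ≤ f₂ ≤ ⋯ and g₁ ≤ g₂ ≤ ⋯ pointwise. Assume that for every x ∈ I_f the sequence (g_n(x)) converges to some η ∈ (0, +∞], and for every x ∈ I_g the sequence (f_n(x)) converges to some η ∈ (0, +∞]. Then I_{f·g} = I_f ∪ I_g, where I_{f·g} := {x ∈ I : lim_{n→∞} f_n(x)·g_n(x) = +∞}. -/

import Mathlib

open Set Filter Topology

/-- `limSet I f` is the set `I_f = {x ∈ I : lim_{n→∞} f_n(x) = +∞}`. -/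
def limSet (I : Set ℝ) (f : ℕ → ℝ → ℝ) : Set ℝ :=
  {x ∈ I | Tendsto (fun n => f n x) atTop atTop}

/-- The sequence `(a_n)` converges to some `η ∈ (0, +∞]`. -/
def TendsToPosLimit (a : ℕ → ℝ) : Prop :=
  (∃ η : ℝ, 0 < η ∧ Tendsto a atTop (𝓝 η)) ∨ Tendsto a atTop atTop

/-- If `f`, `g` are nondecreasing sequences of continuous functions such that on `I_f` the
sequence `g_n(x)` converges to some `η ∈ (0,+∞]` and on `I_g` the sequence `f_n(x)` converges
to some `η ∈ (0,+∞]`, then `I_{f·g} = I_f ∪ I_g`. -/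
theorem stmt_4 (I : Set ℝ) (hI : I.OrdConnected) (hInt : I.Nontrivial)
    (f g : ℕ → ℝ → ℝ)
    (hfc : ∀ n, ContinuousOn (f n) I) (hgc : ∀ n, ContinuousOn (g n) I)
    (hfm : ∀ n, ∀ x ∈ I, f n x ≤ f (n + 1) x)
    (hgm : ∀ n, ∀ x ∈ I, g n x ≤ g (n + 1) x)
    (hg : ∀ x ∈ limSet I f, TendsToPosLimit (fun n => g n x))
    (hf : ∀ x ∈ limSet I g, TendsToPosLimit (fun n => f n x)) :
    limSet I (fun n x => f n x * g n x) = limSet I f ∪ limSet I g := by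
  ext x
  simp only [limSet, mem_setOf_eq, mem_union]
  constructor
  · rintro ⟨hxI, hfg⟩
    have hfmono : Monotone (fun n => f n x) := monotone_nat_of_le_succ (fun n => hfm n x hxI)
    have hgmono : Monotone (fun n => g n x) := monotone_nat_of_le_succ (fun n => hgm n x hxI)
    rcases tendsto_of_monotone hfmono with hF | ⟨L, hL⟩
    · exact Or.inl ⟨hxI, hF⟩
    rcases tendsto_of_monotone hgmono with hG | ⟨M, hM⟩
    · exact Or.inr ⟨hxI, hG⟩
    exfalso
    have : Tendsto (fun n => f n x * g n x) atTop (𝓝 (L * M)) := hL.mul hM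
    exact not_tendsto_nhds_of_tendsto_atTop hfg (L * M) this
  · rintro (⟨hxI, hF⟩ | ⟨hxI, hG⟩)
    · refine ⟨hxI, ?_⟩
      rcases hg x ⟨hxI, hF⟩ with ⟨η, hη, hηt⟩ | hG
      · exact hF.atTop_mul_pos hη hηt
      · exact hF.atTop_mul_atTop₀ hG
    · refine ⟨hxI, ?_⟩
      rcases hf x ⟨hxI, hG⟩ with ⟨η, hη, hηt⟩ | hF
      · exact Tendsto.pos_mul_atTop hη hηt hG
      · exact hF.atTop_mul_atTop₀ hG
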